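/- arXiv:1502.00938 — 3 statements merged into one kernel-verified Lean document; each statement's English description precedes it below -/
import Mathlib

section
/- Dobinski's formula: for every natural number n, the n-th Bell number satisfies B_n = (1/e) * Σ_{m=0}^∞ m^n / m!. -/
open Finset

noncomputable instance setoidFintype (α : Type*) [Fintype α] : Fintype (Setoid α) := by
  classical
  exact Fintype.ofInjective (fun s : Setoid α => s.r) fun s t h =>
    Setoid.ext fun a b => by rw [show s.r = t.r from h]

/-- Transport a setoid along an equivalence of types. -/
def setoidCongr {α β : Type*} (e : α ≃ β) : Setoid α ≃ Setoid β where
  toFun s := Setoid.comap e.symm s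
  invFun s := Setoid.comap e s
  left_inv s := Setoid.ext fun a b => by simp [Setoid.comap_rel]
  right_inv s := Setoid.ext fun a b => by simp [Setoid.comap_rel]

theorem Finpartition.parts_eq_image_part {α : Type*} [Fintype α] [DecidableEq α]
    (P : Finpartition (univ : Finset α)) : P.parts = univ.image P.part := by
  ext t
  simp only [mem_image, mem_univ, true_and]
  constructor
  · intro ht
    obtain ⟨a, -, ha⟩ := P.part_surjOn (by simpa using ht)
    exact ⟨a, ha⟩
  · rintro ⟨a, rfl⟩
    exact P.part_mem.2 (mem_univ a)

theorem Finpartition.eq_of_part_eq {α : Type*} [Fintype α] [DecidableEq α]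
    {P Q : Finpartition (univ : Finset α)} (h : ∀ a, P.part a = Q.part a) : P = Q := by
  ext t
  rw [show P.parts = _ from P.parts_eq_image_part, show Q.parts = _ from Q.parts_eq_image_part]
  simp [h]
/-- From a finpartition of `univ` we get a setoid. -/
def Finpartition.toSetoid {α : Type*} [Fintype α] [DecidableEq α]
    (P : Finpartition (univ : Finset α)) : Setoid α where
  r a b := P.part a = P.part b
  iseqv := ⟨fun _ => rfl, Eq.symm, Eq.trans⟩

noncomputable def finpartitionEquivSetoid (α : Type*) [Fintype α] [DecidableEq α] :
    Finpartition (univ : Finset α) ≃ Setoid α where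
  toFun P := P.toSetoid
  invFun s := letI : DecidableRel s.r := fun _ _ => Classical.dec _; Finpartition.ofSetoid s
  left_inv P := by
    letI : DecidableRel P.toSetoid.r := fun _ _ => Classical.dec _
    apply Finpartition.eq_of_part_eq
    intro a
    ext b
    rw [Finpartition.mem_part_ofSetoid_iff_rel]
    show P.part a = P.part b ↔ _
    rw [eq_comm]
    exact (Finpartition.mem_part_iff_part_eq_part (P := P) (mem_univ b) (mem_univ a)).symm
  right_inv s := by
    letI : DecidableRel s.r := fun _ _ => Classical.dec _
    apply Setoid.ext
    intro a b
    show (Finpartition.ofSetoid s).part a = (Finpartition.ofSetoid s).part b ↔ s.r a b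
    constructor
    · intro h
      have hb : b ∈ (Finpartition.ofSetoid s).part a := h ▸ (Finpartition.ofSetoid s).mem_part (mem_univ b)
      exact (Finpartition.mem_part_ofSetoid_iff_rel).1 hb
    · intro h
      have hb : b ∈ (Finpartition.ofSetoid s).part a := (Finpartition.mem_part_ofSetoid_iff_rel).2 h
      exact ((Finpartition.ofSetoid s).part_eq_of_mem
        ((Finpartition.ofSetoid s).part_mem.2 (mem_univ a)) hb).symm

section OptionSetoid
variable {β : Type*} [Fintype β] [DecidableEq β]

/-- membership in the block of `none` -/
private def inNoneBlock (T : Finset β) : Option β → Prop := fun x => x.elim True (· ∈ T)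

/-- Rebuild a setoid on `Option β` from the block of `none` and a setoid on the rest. -/
def optionSetoidMk (T : Finset β) (t : Setoid {x : β // x ∈ Tᶜ}) : Setoid (Option β) where
  r x y := (inNoneBlock T x ∧ inNoneBlock T y) ∨
    ∃ (i j : β) (hi : i ∈ Tᶜ) (hj : j ∈ Tᶜ),
      x = some i ∧ y = some j ∧ t.r ⟨i, hi⟩ ⟨j, hj⟩
  iseqv := by
    constructor
    · intro x
      match x with
      | none => exact Or.inl ⟨trivial, trivial⟩
      | some i =>
        by_cases hi : i ∈ T
        · exact Or.inl ⟨hi, hi⟩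
        · exact Or.inr ⟨i, i, mem_compl.2 hi, mem_compl.2 hi, rfl, rfl, t.refl _⟩
    · rintro x y (⟨h1, h2⟩ | ⟨i, j, hi, hj, rfl, rfl, h⟩)
      · exact Or.inl ⟨h2, h1⟩
      · exact Or.inr ⟨j, i, hj, hi, rfl, rfl, t.symm h⟩
    · rintro x y z (⟨h1, h2⟩ | ⟨i, j, hi, hj, rfl, rfl, h⟩)
        (⟨h3, h4⟩ | ⟨i', j', hi', hj', he, rfl, h'⟩)
      · exact Or.inl ⟨h1, h4⟩
      · exact absurd (by rw [he] at h2; exact h2) (mem_compl.1 hi')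
      · exact absurd h3 (mem_compl.1 hj)
      · obtain rfl : j = i' := Option.some_injective _ he
        exact Or.inr ⟨i, j', hi, hj', rfl, rfl, t.trans h h'⟩

noncomputable def optionSetoidEquiv :
    Setoid (Option β) ≃ Σ T : Finset β, Setoid {x : β // x ∈ Tᶜ} where
  toFun s :=
    letI : DecidableRel s.r := fun _ _ => Classical.dec _
    ⟨univ.filter fun i => s.r (some i) none, Setoid.comap (fun x => some (x : β)) s⟩
  invFun p := optionSetoidMk p.1 p.2
  left_inv s := by
    letI : DecidableRel s.r := fun _ _ => Classical.dec _
    apply Setoid.ext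
    intro x y
    show ((inNoneBlock _ x ∧ inNoneBlock _ y) ∨ _) ↔ s.r x y
    have hp : ∀ z : Option β, inNoneBlock (univ.filter fun i => s.r (some i) none) z ↔ s.r z none := by
      intro z
      match z with
      | none => simpa [inNoneBlock] using s.refl none
      | some i => simp [inNoneBlock]
    constructor
    · rintro (⟨h1, h2⟩ | ⟨i, j, hi, hj, rfl, rfl, h⟩)
      · exact s.trans ((hp x).1 h1) (s.symm ((hp y).1 h2))
      · exact h
    · intro hxy
      by_cases hx : s.r x none
      · exact Or.inl ⟨(hp x).2 hx, (hp y).2 (s.trans (s.symm hxy) hx)⟩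
      · have hy : ¬ s.r y none := fun hy => hx (s.trans hxy hy)
        obtain ⟨i, rfl⟩ : ∃ i, x = some i := by
          cases x with
          | none => exact absurd (s.refl none) hx
          | some i => exact ⟨i, rfl⟩
        obtain ⟨j, rfl⟩ : ∃ j, y = some j := by
          cases y with
          | none => exact absurd (s.refl none) hy
          | some j => exact ⟨j, rfl⟩
        exact Or.inr ⟨i, j, by simpa using hx, by simpa using hy, rfl, rfl, hxy⟩
  right_inv := by
    rintro ⟨T, t⟩
    letI : DecidableRel (optionSetoidMk T t).r := fun _ _ => Classical.dec _
    have key : ∀ (A : Finset β) (hA : A = T) (u : Setoid {x : β // x ∈ Aᶜ}),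
        (∀ (i j : β) (hi : i ∈ Aᶜ) (hj : j ∈ Aᶜ),
          u.r ⟨i, hi⟩ ⟨j, hj⟩ ↔ t.r ⟨i, hA ▸ hi⟩ ⟨j, hA ▸ hj⟩) →
        (⟨A, u⟩ : Σ T : Finset β, Setoid {x : β // x ∈ Tᶜ}) = ⟨T, t⟩ := by
      rintro A rfl u hu
      congr 1
      apply Setoid.ext
      rintro ⟨i, hi⟩ ⟨j, hj⟩
      exact hu i j hi hj
    apply key
    · intro i j hi hj
      have hi' : ¬ (optionSetoidMk T t).r (some i) none := by simpa using hi
      have hj' : ¬ (optionSetoidMk T t).r (some j) none := by simpa using hj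
      have hiT : i ∈ Tᶜ := mem_compl.2 fun h => hi' (Or.inl ⟨h, trivial⟩)
      have hjT : j ∈ Tᶜ := mem_compl.2 fun h => hj' (Or.inl ⟨h, trivial⟩)
      show (optionSetoidMk _ t).r (some i) (some j) ↔ t.r _ _
      constructor
      · rintro (⟨h1, h2⟩ | ⟨i', j', hi2, hj2, he1, he2, h⟩)
        · exact absurd h1 (mem_compl.1 hiT)
        · obtain rfl : i' = i := Option.some_injective _ he1.symm
          obtain rfl : j' = j := Option.some_injective _ he2.symm
          exact h
      · intro h
        exact Or.inr ⟨i, j, hiT, hjT, rfl, rfl, h⟩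
    · ext i
      simp only [mem_filter, mem_univ, true_and]
      constructor
      · rintro (⟨h1, -⟩ | ⟨i', j', hi', hj', he, hn, h⟩)
        · exact h1
        · exact absurd hn (by simp)
      · intro hi
        exact Or.inl ⟨hi, trivial⟩

end OptionSetoid

noncomputable def bellCard (n : ℕ) : ℕ := Nat.card (Setoid (Fin n))

theorem bellCard_zero : bellCard 0 = 1 := by
  have : Unique (Setoid (Fin 0)) :=
    ⟨⟨⟨fun _ _ => True, ⟨fun _ => trivial, fun h => h, fun h _ => h⟩⟩⟩,
      fun s => Setoid.ext fun a => a.elim0⟩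
  simp [bellCard, Nat.card_unique]

theorem card_setoid_coe {n : ℕ} (T : Finset (Fin n)) :
    Nat.card (Setoid {x : Fin n // x ∈ Tᶜ}) = bellCard (n - T.card) := by
  have h : Fintype.card {x : Fin n // x ∈ Tᶜ} = n - T.card := by
    simp [Fintype.card_coe, Finset.card_compl]
  exact Nat.card_congr (setoidCongr (Fintype.equivFinOfCardEq h))

theorem bellCard_succ (n : ℕ) :
    bellCard (n + 1) = ∑ k ∈ Finset.range (n + 1), n.choose k * bellCard k := by
  have e1 : Setoid (Fin (n + 1)) ≃ Setoid (Option (Fin n)) := setoidCongr (finSuccEquiv n)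
  have e2 := @optionSetoidEquiv (Fin n) _ _
  calc bellCard (n + 1) = Nat.card (Σ T : Finset (Fin n), Setoid {x : Fin n // x ∈ Tᶜ}) :=
        (Nat.card_congr e1).trans (Nat.card_congr e2)
    _ = ∑ T : Finset (Fin n), Nat.card (Setoid {x : Fin n // x ∈ Tᶜ}) := by
        rw [Nat.card_eq_fintype_card, Fintype.card_sigma]
        exact Finset.sum_congr rfl fun T _ => (Nat.card_eq_fintype_card).symm
    _ = ∑ T : Finset (Fin n), bellCard (n - T.card) := by
        exact Finset.sum_congr rfl fun T _ => card_setoid_coe T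
    _ = ∑ k ∈ Finset.range (n + 1), n.choose k * bellCard (n - k) := by
        rw [← Finset.powerset_univ, Finset.powerset_card_disjiUnion]
        erw [Finset.sum_disjiUnion]
        refine Finset.sum_congr (by simp) fun k hk => ?_
        rw [Finset.sum_congr rfl fun T hT => by
          rw [(Finset.mem_powersetCard.1 hT).2], Finset.sum_const, Finset.card_powersetCard,
          Finset.card_univ, Fintype.card_fin, smul_eq_mul]
    _ = ∑ k ∈ Finset.range (n + 1), n.choose k * bellCard k := by
        conv_rhs => rw [← Finset.sum_range_reflect]
        refine Finset.sum_congr rfl fun k hk => ?_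
        have hk' : k ≤ n := Nat.lt_succ_iff.1 (Finset.mem_range.1 hk)
        have h1 : n + 1 - 1 - k = n - k := by omega
        rw [h1, Nat.choose_symm hk']

theorem bell_eq_bellCard (n : ℕ) :
    Fintype.card (Finpartition (Finset.univ : Finset (Fin n))) = bellCard n := by
  rw [← Nat.card_eq_fintype_card]
  exact Nat.card_congr (finpartitionEquivSetoid (Fin n))

theorem exp_one_eq : Real.exp 1 = ∑' m : ℕ, 1 / (Nat.factorial m : ℝ) := by
  rw [Real.exp_eq_exp_ℝ, NormedSpace.exp_eq_tsum_div]
  simp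

theorem shift_eq (n : ℕ) (j : ℕ) :
    ((j + 1 : ℕ) : ℝ) ^ (n + 1) / (Nat.factorial (j + 1)) =
      ∑ k ∈ Finset.range (n + 1), (n.choose k : ℝ) * ((j : ℝ) ^ k / (Nat.factorial j)) := by
  have hj : ((j : ℝ) + 1) ≠ 0 := by positivity
  have h1 : ((j + 1 : ℕ) : ℝ) ^ (n + 1) = ((j : ℝ) + 1) * ((j : ℝ) + 1) ^ n := by
    push_cast; ring
  have h2 : (Nat.factorial (j + 1) : ℝ) = ((j : ℝ) + 1) * (Nat.factorial j) := by
    rw [Nat.factorial_succ]; push_cast; ring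
  rw [h1, h2, mul_div_mul_left _ _ hj, add_pow, Finset.sum_div]
  refine Finset.sum_congr rfl fun k hk => ?_
  rw [one_pow]
  ring

theorem main_dobinski : ∀ n : ℕ, Summable (fun m : ℕ => (m : ℝ) ^ n / (Nat.factorial m)) ∧
    ∑' m : ℕ, (m : ℝ) ^ n / (Nat.factorial m) = Real.exp 1 * bellCard n := by
  intro n
  induction n using Nat.strong_induction_on with
  | _ n ih =>
    match n with
    | 0 =>
      constructor
      · exact (Real.summable_pow_div_factorial 1).congr fun m => by simp
      · rw [bellCard_zero, exp_one_eq]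
        simp only [pow_zero, Nat.cast_one, mul_one]
    | n + 1 =>
      have hsum : ∀ k ≤ n, Summable (fun m : ℕ => (m : ℝ) ^ k / (Nat.factorial m)) :=
        fun k hk => (ih k (by omega)).1
      have hshift := shift_eq n
      have hs2 : Summable (fun j : ℕ => ((j + 1 : ℕ) : ℝ) ^ (n + 1) / (Nat.factorial (j + 1))) := by
        rw [summable_congr hshift]
        exact summable_sum fun k hk =>
          ((hsum k (Nat.lt_succ_iff.1 (Finset.mem_range.1 hk))).mul_left _)
      have hsg : Summable (fun m : ℕ => (m : ℝ) ^ (n + 1) / (Nat.factorial m)) :=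
        (summable_nat_add_iff 1).1 hs2
      refine ⟨hsg, ?_⟩
      rw [hsg.tsum_eq_zero_add]
      have h0 : ((0 : ℕ) : ℝ) ^ (n + 1) / (Nat.factorial 0) = 0 := by simp
      rw [h0, zero_add]
      calc ∑' j : ℕ, ((j + 1 : ℕ) : ℝ) ^ (n + 1) / (Nat.factorial (j + 1))
          = ∑' j : ℕ, ∑ k ∈ Finset.range (n + 1),
              (n.choose k : ℝ) * ((j : ℝ) ^ k / (Nat.factorial j)) := tsum_congr hshift
        _ = ∑ k ∈ Finset.range (n + 1), ∑' j : ℕ,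
              (n.choose k : ℝ) * ((j : ℝ) ^ k / (Nat.factorial j)) :=
            Summable.tsum_finsetSum fun k hk =>
              (hsum k (Nat.lt_succ_iff.1 (Finset.mem_range.1 hk))).mul_left _
        _ = ∑ k ∈ Finset.range (n + 1), (n.choose k : ℝ) *
              (Real.exp 1 * bellCard k) := by
            refine Finset.sum_congr rfl fun k hk => ?_
            rw [tsum_mul_left, (ih k (by
              have := Finset.mem_range.1 hk; omega)).2]
        _ = Real.exp 1 * bellCard (n + 1) := by
            rw [bellCard_succ n]
            push_cast
            rw [Finset.mul_sum]
            exact Finset.sum_congr rfl fun k _ => by ring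

theorem dobinski' (n : ℕ) :
    (Fintype.card (Finpartition (Finset.univ : Finset (Fin n))) : ℝ)
      = (1 / Real.exp 1) * ∑' m : ℕ, (m : ℝ) ^ n / (Nat.factorial m) := by
  rw [(main_dobinski n).2, bell_eq_bellCard]
  rw [one_div, inv_mul_cancel_left₀ (Real.exp_ne_zero 1)]

open scoped BigOperators

/-- The `n`-th Bell number: the number of set partitions of `{1, ..., n}`. -/
def bell (n : ℕ) : ℕ := Fintype.card (Finpartition (Finset.univ : Finset (Fin n)))

/-- Dobinski's formula: `B_n = (1/e) ∑_{m ≥ 0} m^n / m!`. -/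
theorem dobinski (n : ℕ) :
    (bell n : ℝ) = (1 / Real.exp 1) * ∑' m : ℕ, (m : ℝ) ^ n / (Nat.factorial m) := by
  exact dobinski' n
end

section
/- The sum over all set partitions λ of {1,...,n} of the number of levels L(λ) equals (n-1)·B_{n-1}; equivalently, the expected number of levels of a uniformly random set partition of {1,...,n} is (n-1)·B_{n-1}/B_n. -/
open scoped BigOperators Classical

open Finset

section Aux

variable {α β : Type*}

/-- Setoid from a finpartition of univ. -/
noncomputable def finpartToSetoid [Fintype α] [DecidableEq α]
    (P : Finpartition (Finset.univ : Finset α)) : Setoid α :=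
  ⟨fun a b => b ∈ P.part a, by
    constructor
    · exact fun a => P.mem_part (mem_univ a)
    · intro a b h
      rw [P.mem_part_iff_part_eq_part (mem_univ b) (mem_univ a)] at h
      rw [h]; exact P.mem_part (mem_univ a)
    · intro a b c hab hbc
      rw [P.mem_part_iff_part_eq_part (mem_univ b) (mem_univ a)] at hab
      rw [P.mem_part_iff_part_eq_part (mem_univ c) (mem_univ b)] at hbc
      rw [← hab, ← hbc]; exact P.mem_part (mem_univ c)⟩

lemma finpart_eq_of_part_eq [Fintype α] [DecidableEq α]
    {P Q : Finpartition (Finset.univ : Finset α)}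
    (h : ∀ a b : α, b ∈ P.part a ↔ b ∈ Q.part a) : P = Q := by
  have hpq : ∀ a, P.part a = Q.part a := fun a => Finset.ext fun b => h a b
  ext t
  constructor
  · intro ht
    obtain ⟨a, ha⟩ := P.nonempty_of_mem_parts ht
    have := P.part_eq_of_mem ht ha
    rw [← this, hpq]
    exact Q.part_mem.2 (mem_univ a)
  · intro ht
    obtain ⟨a, ha⟩ := Q.nonempty_of_mem_parts ht
    have := Q.part_eq_of_mem ht ha
    rw [← this, ← hpq]
    exact P.part_mem.2 (mem_univ a)

/-- The equivalence between finpartitions of `univ` and setoids. -/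
noncomputable def finpartEquivSetoid [Fintype α] [DecidableEq α] :
    Finpartition (Finset.univ : Finset α) ≃ Setoid α where
  toFun := finpartToSetoid
  invFun s := Finpartition.ofSetoid s
  left_inv P := by
    apply finpart_eq_of_part_eq
    intro a b
    rw [Finpartition.mem_part_ofSetoid_iff_rel]
    rfl
  right_inv s := by
    apply Setoid.ext
    intro a b
    show b ∈ (Finpartition.ofSetoid s).part a ↔ _
    rw [Finpartition.mem_part_ofSetoid_iff_rel]

/-- Setoids relating two fixed merged points are equivalent to setoids on the merged type. -/
noncomputable def setoidMergeEquiv (x y : α) (f : α → β) (g : β → α)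
    (hxy : f x = f y) (hfg : ∀ b, f (g b) = b)
    (hgf : ∀ a, g (f a) = a ∨ (g (f a) = x ∧ a = y)) :
    {r : Setoid α // r x y} ≃ Setoid β where
  toFun r := Setoid.comap g r.1
  invFun s := ⟨Setoid.comap f s, by rw [Setoid.comap_rel, hxy]⟩
  left_inv r := by
    obtain ⟨r, hr⟩ := r
    apply Subtype.ext
    apply Setoid.ext
    intro a b
    simp only [Setoid.comap_rel]
    have key : ∀ a, r (g (f a)) a := by
      intro a
      rcases hgf a with h | ⟨h1, h2⟩
      · rw [h]
      · rw [h1, h2]; exact hr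
    constructor
    · intro h
      exact r.trans (r.symm (key a)) (r.trans h (key b))
    · intro h
      exact r.trans (key a) (r.trans h (r.symm (key b)))
  right_inv s := by
    apply Setoid.ext
    intro a b
    show s (f (g a)) (f (g b)) ↔ s a b
    rw [hfg, hfg]

end Aux

/-- The number of levels of a set partition of `{0, ..., n-1}`: the number of indices
`i ≤ n - 2` such that `i` and `i+1` lie in the same block. -/
noncomputable def levels {n : ℕ} (P : Finpartition (Finset.univ : Finset (Fin n))) : ℕ :=
  ((Finset.range (n - 1)).filter fun i =>
    ∃ b ∈ P.parts, ∃ (hi : i < n) (hj : i + 1 < n),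
      (⟨i, hi⟩ : Fin n) ∈ b ∧ (⟨i + 1, hj⟩ : Fin n) ∈ b).card

lemma count_level (n i : ℕ) (hi : i < n) (hj : i + 1 < n) :
    ((Finset.univ : Finset (Finpartition (Finset.univ : Finset (Fin n)))).filter fun P =>
      ∃ b ∈ P.parts, ∃ (hi : i < n) (hj : i + 1 < n),
        (⟨i, hi⟩ : Fin n) ∈ b ∧ (⟨i + 1, hj⟩ : Fin n) ∈ b).card = bell (n - 1) := by
  classical
  set x : Fin n := ⟨i, hi⟩
  set y : Fin n := ⟨i + 1, hj⟩
  -- condition is equivalent to relation in the associated setoid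
  have hcond : ∀ P : Finpartition (Finset.univ : Finset (Fin n)),
      (∃ b ∈ P.parts, ∃ (hi : i < n) (hj : i + 1 < n),
        (⟨i, hi⟩ : Fin n) ∈ b ∧ (⟨i + 1, hj⟩ : Fin n) ∈ b) ↔ (finpartToSetoid P) x y := by
    intro P
    constructor
    · rintro ⟨b, hb, hi', hj', hxb, hyb⟩
      show y ∈ P.part x
      rw [P.part_eq_of_mem hb hxb]
      exact hyb
    · intro h
      exact ⟨P.part x, P.part_mem.2 (mem_univ x), hi, hj, P.mem_part (mem_univ x), h⟩
  -- the merge maps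
  have hin1 : i < n - 1 := by omega
  let f : Fin n → Fin (n - 1) := fun a =>
    if h : (a : ℕ) ≤ i then ⟨a, by omega⟩ else ⟨(a : ℕ) - 1, by omega⟩
  let g : Fin (n - 1) → Fin n := fun b =>
    if h : (b : ℕ) ≤ i then ⟨b, by omega⟩ else ⟨(b : ℕ) + 1, by omega⟩
  have hfval : ∀ a : Fin n, ((f a : Fin (n - 1)) : ℕ) =
      if (a : ℕ) ≤ i then (a : ℕ) else (a : ℕ) - 1 := by
    intro a; simp only [f]; split_ifs <;> rfl
  have hgval : ∀ b : Fin (n - 1), ((g b : Fin n) : ℕ) =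
      if (b : ℕ) ≤ i then (b : ℕ) else (b : ℕ) + 1 := by
    intro b; simp only [g]; split_ifs <;> rfl
  have hxy : f x = f y := by
    apply Fin.ext
    rw [hfval, hfval]
    show (if i ≤ i then i else i - 1) = (if i + 1 ≤ i then i + 1 else i + 1 - 1)
    split_ifs <;> omega
  have hfg : ∀ b, f (g b) = b := by
    intro b
    have hb := b.2
    apply Fin.ext
    rw [hfval, hgval]
    split_ifs <;> omega
  have hgf : ∀ a, g (f a) = a ∨ (g (f a) = x ∧ a = y) := by
    intro a
    have ha := a.2
    by_cases hcase : (a : ℕ) = i + 1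
    · right
      constructor
      · apply Fin.ext
        rw [hgval, hfval]
        show _ = i
        split_ifs <;> omega
      · apply Fin.ext
        show (a : ℕ) = i + 1
        exact hcase
    · left
      apply Fin.ext
      rw [hgval, hfval]
      split_ifs <;> omega
  -- now count
  have e1 : {P : Finpartition (Finset.univ : Finset (Fin n)) //
      ∃ b ∈ P.parts, ∃ (hi : i < n) (hj : i + 1 < n),
        (⟨i, hi⟩ : Fin n) ∈ b ∧ (⟨i + 1, hj⟩ : Fin n) ∈ b} ≃
      Finpartition (Finset.univ : Finset (Fin (n - 1))) :=
    ((Equiv.subtypeEquiv finpartEquivSetoid (by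
        intro P; exact hcond P)).trans
      (setoidMergeEquiv x y f g hxy hfg hgf)).trans finpartEquivSetoid.symm
  rw [← Fintype.card_subtype]
  rw [Fintype.card_congr e1]
  rfl

/-- The total number of levels over all set partitions of an `n`-set is `(n-1)·B_{n-1}`;
equivalently the expected number of levels of a uniform set partition is
`(n-1)·B_{n-1}/B_n`. -/
theorem levels_sum (n : ℕ) :
    ∑ P : Finpartition (Finset.univ : Finset (Fin n)), levels P = (n - 1) * bell (n - 1) := by
  classical
  have : ∀ P : Finpartition (Finset.univ : Finset (Fin n)), levels P =
      ∑ i ∈ Finset.range (n - 1), if (∃ b ∈ P.parts, ∃ (hi : i < n) (hj : i + 1 < n),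
        (⟨i, hi⟩ : Fin n) ∈ b ∧ (⟨i + 1, hj⟩ : Fin n) ∈ b) then 1 else 0 := by
    intro P
    rw [levels, Finset.card_filter]
  simp_rw [this]
  rw [Finset.sum_comm]
  have hterm : ∀ i ∈ Finset.range (n - 1),
      (∑ P : Finpartition (Finset.univ : Finset (Fin n)),
        if (∃ b ∈ P.parts, ∃ (hi : i < n) (hj : i + 1 < n),
          (⟨i, hi⟩ : Fin n) ∈ b ∧ (⟨i + 1, hj⟩ : Fin n) ∈ b) then 1 else 0) = bell (n - 1) := by
    intro i hi
    rw [Finset.mem_range] at hi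
    rw [← Finset.card_filter]
    exact count_level n i (by omega) (by omega)
  rw [Finset.sum_congr rfl hterm, Finset.sum_const, Finset.card_range, smul_eq_mul]
end

section
/- For a set partition λ of {1,...,n} generated by the sequential insertion procedure (elements 1,...,n assigned in order, with each non-minimal element assigned uniformly to one of the currently open blocks), the crossing number satisfies cr(λ) = Σ_k X_k, where for each non-minimal element k, X_k is uniform on {0,1,...,a_k−1}, a_k being the number of open blocks when k is inserted, and the X_k are independent given the sets of block minima and maxima. -/
open scoped BigOperators Classical

/-- `x` and `y` lie in a common block of `P`. -/
def SameBlock {n : ℕ} (P : Finpartition (Finset.univ : Finset (Fin n))) (x y : Fin n) : Prop :=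
  ∃ b ∈ P.parts, x ∈ b ∧ y ∈ b

/-- `x < y` are adjacent (consecutive) elements of a common block of `P`. -/
def Adj {n : ℕ} (P : Finpartition (Finset.univ : Finset (Fin n))) (x y : Fin n) : Prop :=
  x < y ∧ SameBlock P x y ∧ ∀ z, x < z → z < y → ¬ SameBlock P x z

/-- The number of crossings of `P`: quadruples `i < i' < j < j'` with `i, j` adjacent
elements of one block and `i', j'` adjacent elements of another block. -/
noncomputable def crossings {n : ℕ} (P : Finpartition (Finset.univ : Finset (Fin n))) : ℕ :=
  ((Finset.univ : Finset (Fin n × Fin n × Fin n × Fin n)).filter fun q =>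
    q.1 < q.2.1 ∧ q.2.1 < q.2.2.1 ∧ q.2.2.1 < q.2.2.2 ∧
      Adj P q.1 q.2.2.1 ∧ Adj P q.2.1 q.2.2.2).card

/-- The number of crossings of `P` whose second coordinate pair ends at `k`, i.e. crossings
`i < i' < j < j'` (with `(i, j)` and `(i', j')` the two adjacent pairs) having `j = k`. -/
noncomputable def crossingsAt {n : ℕ} (P : Finpartition (Finset.univ : Finset (Fin n)))
    (k : Fin n) : ℕ :=
  ((Finset.univ : Finset (Fin n × Fin n × Fin n × Fin n)).filter fun q =>
    q.1 < q.2.1 ∧ q.2.1 < q.2.2.1 ∧ q.2.2.1 < q.2.2.2 ∧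
      Adj P q.1 q.2.2.1 ∧ Adj P q.2.1 q.2.2.2 ∧ q.2.2.1 = k).card

/-- The set of minima of the blocks of `P`. -/
noncomputable def blockMins {n : ℕ} (P : Finpartition (Finset.univ : Finset (Fin n))) :
    Finset (Fin n) :=
  P.parts.attach.image fun b => b.1.min' (P.nonempty_of_mem_parts b.2)

/-- The set of maxima of the blocks of `P`. -/
noncomputable def blockMaxs {n : ℕ} (P : Finpartition (Finset.univ : Finset (Fin n))) :
    Finset (Fin n) :=
  P.parts.attach.image fun b => b.1.max' (P.nonempty_of_mem_parts b.2)

/-- The number of blocks of `P` that are open when element `k` is inserted: blocks whose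
minimum is `< k` and whose maximum is `≥ k`. -/
noncomputable def openBlocks {n : ℕ} (P : Finpartition (Finset.univ : Finset (Fin n)))
    (k : Fin n) : ℕ :=
  (P.parts.attach.filter fun b =>
    b.1.min' (P.nonempty_of_mem_parts b.2) < k ∧ k ≤ b.1.max' (P.nonempty_of_mem_parts b.2)).card



namespace CIR
open Finset
variable {n : ℕ} {Q : Finpartition (Finset.univ : Finset (Fin n))} {x y z k m m' : Fin n}

lemma sb_refl (Q : Finpartition (Finset.univ : Finset (Fin n))) (x : Fin n) : SameBlock Q x x := by
  obtain ⟨b, hb, hx⟩ := Q.exists_mem (mem_univ x); exact ⟨b, hb, hx, hx⟩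

lemma sb_symm (h : SameBlock Q x y) : SameBlock Q y x := by
  obtain ⟨b, hb, hx, hy⟩ := h; exact ⟨b, hb, hy, hx⟩

lemma sb_trans (h : SameBlock Q x y) (h' : SameBlock Q y z) : SameBlock Q x z := by
  obtain ⟨b, hb, hx, hy⟩ := h; obtain ⟨b', hb', hy', hz⟩ := h'
  exact ⟨b, hb, hx, Q.eq_of_mem_parts hb' hb hy' hy ▸ hz⟩

lemma sameBlock_iff_mem_part : SameBlock Q x y ↔ y ∈ Q.part x := by
  constructor
  · rintro ⟨b, hb, hx, hy⟩; rwa [Q.part_eq_of_mem hb hx]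
  · intro h; exact ⟨Q.part x, Q.part_mem.2 (mem_univ x), Q.mem_part (mem_univ x), h⟩

lemma adj_left_unique (h : Adj Q m k) (h' : Adj Q m' k) : m = m' := by
  by_contra hne
  rcases lt_or_gt_of_ne hne with hlt | hlt
  · exact h.2.2 m' hlt h'.1 (sb_trans h.2.1 (sb_symm h'.2.1))
  · exact h'.2.2 m hlt h.1 (sb_trans h'.2.1 (sb_symm h.2.1))

lemma adj_right_unique (h : Adj Q k m) (h' : Adj Q k m') : m = m' := by
  by_contra hne
  rcases lt_or_gt_of_ne hne with hlt | hlt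
  · exact h'.2.2 m h.1 hlt h.2.1
  · exact h.2.2 m' h'.1 hlt h'.2.1

lemma exists_adj_left (hx : x < k) (h : SameBlock Q x k) : ∃ m, Adj Q m k ∧ x ≤ m := by
  set s : Finset (Fin n) := univ.filter (fun z => z < k ∧ SameBlock Q z k) with hs
  have hxs : x ∈ s := by simp [hs, hx, h]
  have hne : s.Nonempty := ⟨x, hxs⟩
  refine ⟨s.max' hne, ⟨(mem_filter.1 (s.max'_mem hne)).2.1, (mem_filter.1 (s.max'_mem hne)).2.2, ?_⟩, s.le_max' x hxs⟩
  intro z hz1 hz2 hsb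
  have hzs : z ∈ s := by
    simp only [hs, mem_filter, mem_univ, true_and]
    exact ⟨hz2, sb_trans (sb_symm hsb) (mem_filter.1 (s.max'_mem hne)).2.2⟩
  exact absurd (s.le_max' z hzs) (not_le.2 hz1)

lemma exists_adj_right (hx : k < x) (h : SameBlock Q k x) : ∃ m, Adj Q k m ∧ m ≤ x := by
  set s : Finset (Fin n) := univ.filter (fun z => k < z ∧ SameBlock Q k z) with hs
  have hxs : x ∈ s := by simp [hs, hx, h]
  have hne : s.Nonempty := ⟨x, hxs⟩
  refine ⟨s.min' hne, ⟨(mem_filter.1 (s.min'_mem hne)).2.1, (mem_filter.1 (s.min'_mem hne)).2.2, ?_⟩, s.min'_le x hxs⟩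
  intro z hz1 hz2 hsb
  have hzs : z ∈ s := by
    simp only [hs, mem_filter, mem_univ, true_and]
    exact ⟨hz1, hsb⟩
  exact absurd (s.min'_le z hzs) (not_le.2 hz2)

lemma mem_blockMins_iff : k ∈ blockMins Q ↔ ∀ x, x < k → ¬ SameBlock Q x k := by
  constructor
  · rintro hk x hx ⟨b, hb, hxb, hkb⟩
    simp only [blockMins, mem_image, mem_attach, true_and, Subtype.exists] at hk
    obtain ⟨b', hb', hk'⟩ := hk
    have : b' = b := Q.eq_of_mem_parts hb' hb (hk' ▸ b'.min'_mem _) hkb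
    subst this
    exact absurd (Finset.min'_le _ _ hxb) (by rw [hk']; exact not_le.2 hx)
  · intro h
    obtain ⟨b, hb, hkb⟩ := Q.exists_mem (mem_univ k)
    have hmin : b.min' ⟨k, hkb⟩ = k := by
      rcases lt_or_eq_of_le (b.min'_le k hkb) with hlt | he
      · exact absurd ⟨b, hb, b.min'_mem _, hkb⟩ (h _ hlt)
      · exact he
    simp only [blockMins, mem_image, mem_attach, true_and, Subtype.exists]
    exact ⟨b, hb, by rw [← hmin]⟩

lemma mem_blockMaxs_iff : k ∈ blockMaxs Q ↔ ∀ x, k < x → ¬ SameBlock Q k x := by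
  constructor
  · rintro hk x hx ⟨b, hb, hkb, hxb⟩
    simp only [blockMaxs, mem_image, mem_attach, true_and, Subtype.exists] at hk
    obtain ⟨b', hb', hk'⟩ := hk
    have : b' = b := Q.eq_of_mem_parts hb' hb (hk' ▸ b'.max'_mem _) hkb
    subst this
    exact absurd (Finset.le_max' _ _ hxb) (by rw [hk']; exact not_le.2 hx)
  · intro h
    obtain ⟨b, hb, hkb⟩ := Q.exists_mem (mem_univ k)
    have hmax : b.max' ⟨k, hkb⟩ = k := by
      rcases lt_or_eq_of_le (b.le_max' k hkb) with hlt | he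
      · exact absurd ⟨b, hb, hkb, b.max'_mem _⟩ (h _ hlt)
      · exact he.symm
    simp only [blockMaxs, mem_image, mem_attach, true_and, Subtype.exists]
    exact ⟨b, hb, by rw [← hmax]⟩

noncomputable def pred (Q : Finpartition (Finset.univ : Finset (Fin n))) (k : Fin n) :
    Option (Fin n) :=
  if h : ∃ m, Adj Q m k then some h.choose else none

lemma pred_eq_some_iff : pred Q k = some m ↔ Adj Q m k := by
  unfold pred
  split
  · rename_i h
    simp only [Option.some.injEq]
    exact ⟨fun he => he ▸ h.choose_spec, fun ha => (adj_left_unique h.choose_spec ha)⟩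
  · rename_i h
    simp only [false_iff, reduceCtorEq]
    exact fun ha => h ⟨m, ha⟩

lemma pred_eq_none_iff : pred Q k = none ↔ ∀ m, ¬ Adj Q m k := by
  unfold pred
  split
  · rename_i h
    simp only [reduceCtorEq, false_iff, not_forall, not_not]
    exact ⟨h.choose, h.choose_spec⟩
  · rename_i h
    simpa using fun m ha => h ⟨m, ha⟩

lemma mem_blockMins_iff_pred : k ∈ blockMins Q ↔ pred Q k = none := by
  rw [mem_blockMins_iff, pred_eq_none_iff]
  constructor
  · exact fun h m ha => h m ha.1 ha.2.1
  · intro h x hx hsb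
    obtain ⟨m, hm, -⟩ := exists_adj_left hx hsb
    exact h m hm

lemma mem_blockMaxs_iff_pred : k ∈ blockMaxs Q ↔ ∀ x, pred Q x ≠ some k := by
  rw [mem_blockMaxs_iff]
  constructor
  · intro h x hx
    rw [pred_eq_some_iff] at hx
    exact h x hx.1 hx.2.1
  · intro h x hx hsb
    obtain ⟨m, hm, -⟩ := exists_adj_right hx hsb
    exact h m (pred_eq_some_iff.2 hm)

lemma valid_lt (Q : Finpartition (Finset.univ : Finset (Fin n))) :
    ∀ k m : Fin n, pred Q k = some m → m < k := fun _ _ h => (pred_eq_some_iff.1 h).1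

lemma valid_inj (Q : Finpartition (Finset.univ : Finset (Fin n))) :
    ∀ x x' m : Fin n, pred Q x = some m → pred Q x' = some m → x = x' := fun _ _ _ h h' =>
  adj_right_unique (pred_eq_some_iff.1 h) (pred_eq_some_iff.1 h')

end CIR

namespace CIR
open Finset
variable {n : ℕ}

/-- Open-block last elements at time `t`, relative to a prescribed max-set `X`:
elements `m < t` not in `X` that are not yet the predecessor of anything below `t`. -/
def OX (X : Finset (Fin n)) (p : Fin n → Option (Fin n)) (t : ℕ) : Finset (Fin n) :=
  univ.filter fun m => (m : ℕ) < t ∧ m ∉ X ∧ ∀ x : Fin n, (x : ℕ) < t → p x ≠ some m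

lemma OX_congr {X : Finset (Fin n)} {p p' : Fin n → Option (Fin n)} {t : ℕ}
    (h : ∀ x : Fin n, (x : ℕ) < t → p x = p' x) : OX X p t = OX X p' t := by
  unfold OX
  apply filter_congr
  intro m _
  constructor
  · rintro ⟨h1, h2, h3⟩; exact ⟨h1, h2, fun x hx => h x hx ▸ h3 x hx⟩
  · rintro ⟨h1, h2, h3⟩; exact ⟨h1, h2, fun x hx => (h x hx).symm ▸ h3 x hx⟩

/-- The fundamental counting identity: the number of open blocks at time `t` equals
the number of mins `< t` minus the number of maxs `< t`. -/
lemma OX_card {X : Finset (Fin n)} {p : Fin n → Option (Fin n)} {t : ℕ}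
    (h1 : ∀ x m : Fin n, (x : ℕ) < t → p x = some m → m < x ∧ m ∉ X)
    (h2 : ∀ x x' m : Fin n, (x : ℕ) < t → (x' : ℕ) < t → p x = some m → p x' = some m → x = x') :
    (OX X p t).card + (X.filter fun m : Fin n => (m : ℕ) < t).card
      = (univ.filter fun x : Fin n => (x : ℕ) < t ∧ p x = none).card := by
  classical
  set v : Fin n → Fin n := fun x => (p x).getD x with hv
  set Sx : Finset (Fin n) := univ.filter (fun x => (x : ℕ) < t ∧ p x ≠ none) with hSx
  set S0 : Finset (Fin n) := univ.filter (fun x : Fin n => (x : ℕ) < t ∧ p x = none) with hS0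
  set Xt : Finset (Fin n) := X.filter (fun m => (m : ℕ) < t) with hXt
  set B : Finset (Fin n) := Sx.image v with hB
  have hvs : ∀ x : Fin n, x ∈ Sx → p x = some (v x) := by
    intro x hx
    obtain ⟨-, -, hne⟩ := mem_filter.1 hx
    obtain ⟨m, hm⟩ := Option.ne_none_iff_exists'.1 hne
    simp [hv, hm]
  have hmemB : ∀ m : Fin n, m ∈ B ↔ ((m : ℕ) < t ∧ m ∉ X ∧ ∃ x : Fin n, (x : ℕ) < t ∧ p x = some m) := by
    intro m
    constructor
    · rintro hm
      obtain ⟨x, hx, rfl⟩ := mem_image.1 hm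
      have hpx := hvs x hx
      have hxt := (mem_filter.1 hx).2.1
      obtain ⟨hlt, hX⟩ := h1 x _ hxt hpx
      exact ⟨lt_trans (Fin.lt_iff_val_lt_val.1 hlt) hxt, hX, x, hxt, hpx⟩
    · rintro ⟨hmt, hX, x, hxt, hpx⟩
      refine mem_image.2 ⟨x, mem_filter.2 ⟨mem_univ _, hxt, by simp [hpx]⟩, ?_⟩
      simp [hv, hpx]
  have hBcard : B.card = Sx.card := by
    rw [hB]
    apply Finset.card_image_of_injOn
    intro x hx x' hx' hvv
    exact h2 x x' (v x) (mem_filter.1 hx).2.1 (mem_filter.1 hx').2.1 (hvs x hx)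
      (hvv ▸ hvs x' hx')
  have hd1 : Disjoint (OX X p t) Xt := by
    rw [disjoint_left]
    intro m hm hm'
    exact (mem_filter.1 hm).2.2.1 (mem_filter.1 hm').1
  have hd2 : Disjoint (OX X p t ∪ Xt) B := by
    rw [disjoint_left]
    intro m hm hm'
    obtain ⟨-, -, x, hxt, hpx⟩ := (hmemB m).1 hm'
    rcases mem_union.1 hm with h | h
    · exact (mem_filter.1 h).2.2.2 x hxt hpx
    · exact ((hmemB m).1 hm').2.1 (mem_filter.1 h).1
  have hcover : OX X p t ∪ Xt ∪ B = univ.filter (fun m : Fin n => (m : ℕ) < t) := by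
    ext m
    simp only [mem_union, hmemB m, OX, hXt, mem_filter, mem_univ, true_and]
    constructor
    · rintro ((⟨h, -⟩ | ⟨-, h⟩) | ⟨h, -⟩) <;> exact h
    · intro hmt
      by_cases hX : m ∈ X
      · exact Or.inl (Or.inr ⟨hX, hmt⟩)
      by_cases hex : ∃ x : Fin n, (x : ℕ) < t ∧ p x = some m
      · exact Or.inr ⟨hmt, hX, hex⟩
      · push_neg at hex
        exact Or.inl (Or.inl ⟨hmt, hX, hex⟩)
  have hsplitT : Sx ∪ S0 = univ.filter (fun m : Fin n => (m : ℕ) < t) := by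
    ext x
    simp only [hSx, hS0, mem_union, mem_filter, mem_univ, true_and]
    by_cases hp : p x = none <;> by_cases hxt : (x : ℕ) < t <;> simp [hp, hxt]
  have hdT : Disjoint Sx S0 := by
    rw [disjoint_left]
    intro x hx hx'
    exact (mem_filter.1 hx).2.2 (mem_filter.1 hx').2.2
  have e1 : (OX X p t).card + Xt.card + B.card
      = (univ.filter (fun m : Fin n => (m : ℕ) < t)).card := by
    rw [← hcover, card_union_of_disjoint hd2, card_union_of_disjoint hd1]
  have e2 : Sx.card + S0.card = (univ.filter (fun m : Fin n => (m : ℕ) < t)).card := by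
    rw [← hsplitT, card_union_of_disjoint hdT]
  omega

/-- counting elements above a given element of a finset, for `orderEmbOfFin`. -/
lemma card_filter_gt_orderEmbOfFin (s : Finset (Fin n)) (j : Fin s.card) :
    (s.filter fun x => s.orderEmbOfFin rfl j < x).card = s.card - 1 - (j : ℕ) := by
  classical
  have himg : s.filter (fun x => s.orderEmbOfFin rfl j < x)
      = (Finset.Ioi j).image (s.orderEmbOfFin rfl) := by
    ext x
    simp only [mem_filter, mem_image, mem_Ioi]
    constructor
    · rintro ⟨hxs, hlt⟩
      have : x ∈ Set.range (s.orderEmbOfFin rfl) := by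
        rw [Finset.range_orderEmbOfFin]; exact hxs
      obtain ⟨j', rfl⟩ := this
      exact ⟨j', (OrderEmbedding.lt_iff_lt _).1 hlt, rfl⟩
    · rintro ⟨j', hj', rfl⟩
      exact ⟨Finset.orderEmbOfFin_mem _ _ _, (OrderEmbedding.lt_iff_lt _).2 hj'⟩
  rw [himg, Finset.card_image_of_injective _ (s.orderEmbOfFin rfl).injective, Fin.card_Ioi]

/-- two elements of a finset with the same number of elements above them are equal. -/
lemma eq_of_card_filter_gt_eq {s : Finset (Fin n)} {a b : Fin n} (ha : a ∈ s) (hb : b ∈ s)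
    (h : (s.filter fun x => a < x).card = (s.filter fun x => b < x).card) : a = b := by
  by_contra hne
  have key : ∀ u w : Fin n, u ∈ s → w ∈ s → u < w →
      (s.filter fun x => w < x).card < (s.filter fun x => u < x).card := by
    intro u w hu hw huw
    have hsub : insert w (s.filter fun x => w < x) ⊆ s.filter fun x => u < x := by
      intro x hx
      rcases mem_insert.1 hx with rfl | hx
      · exact mem_filter.2 ⟨hw, huw⟩
      · exact mem_filter.2 ⟨(mem_filter.1 hx).1, lt_trans huw (mem_filter.1 hx).2⟩
    have e1 : (insert w (s.filter fun x => w < x)).card = (s.filter fun x => w < x).card + 1 :=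
      card_insert_of_notMem (fun hc => lt_irrefl w (mem_filter.1 hc).2)
    have e2 : (insert w (s.filter fun x => w < x)).card ≤ (s.filter fun x => u < x).card :=
      card_le_card hsub
    omega
  rcases lt_or_gt_of_ne hne with hlt | hlt
  · exact absurd h (ne_of_gt (key a b ha hb hlt))
  · exact absurd h (ne_of_lt (key b a hb ha hlt))

end CIR

namespace CIR
open Finset
variable {n : ℕ}

/-- downward reachability along `p`. -/
def Down (p : Fin n → Option (Fin n)) : Fin n → Fin n → Prop :=
  Relation.ReflTransGen fun a b => p a = some b

/-- the root of the chain through `k`. -/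
noncomputable def rt (p : Fin n → Option (Fin n)) (hp : ∀ k m : Fin n, p k = some m → m < k)
    (k : Fin n) : Fin n :=
  match h : p k with
  | none => k
  | some m => rt p hp m
termination_by (k : ℕ)
decreasing_by exact hp _ _ h

variable {p : Fin n → Option (Fin n)} {hp : ∀ k m : Fin n, p k = some m → m < k}

lemma rt_none {k : Fin n} (h : p k = none) : rt p hp k = k := by
  rw [rt, h]

lemma rt_some {k m : Fin n} (h : p k = some m) : rt p hp k = rt p hp m := by
  rw [rt, h]

lemma down_le (hp : ∀ k m : Fin n, p k = some m → m < k) {a b : Fin n} (h : Down p a b) :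
    b ≤ a := by
  induction h with
  | refl => exact le_refl _
  | tail _ h2 ih => exact le_trans (le_of_lt (hp _ _ h2)) ih

lemma rt_eq_of_down {a b : Fin n} (h : Down p a b) : rt p hp a = rt p hp b := by
  induction h with
  | refl => rfl
  | tail _ h2 ih => rw [ih]; exact rt_some h2

lemma rt_le (k : Fin n) : rt p hp k ≤ k := by
  have : ∀ t : ℕ, ∀ k : Fin n, (k : ℕ) < t → rt p hp k ≤ k := by
    intro t
    induction t with
    | zero => omega
    | succ t ih =>
      intro k hk
      rcases Nat.lt_or_ge (k : ℕ) t with h | h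
      · exact ih k h
      · cases hpk : p k with
        | none => rw [rt_none hpk]
        | some m =>
          rw [rt_some hpk]
          have hm := hp _ _ hpk
          exact le_trans (ih m (by omega)) (le_of_lt hm)
  exact this (k + 1) k (Nat.lt_succ_self _)

lemma down_rt (k : Fin n) : Down p k (rt p hp k) := by
  have : ∀ t : ℕ, ∀ k : Fin n, (k : ℕ) < t → Down p k (rt p hp k) := by
    intro t
    induction t with
    | zero => omega
    | succ t ih =>
      intro k hk
      rcases Nat.lt_or_ge (k : ℕ) t with h | h
      · exact ih k h
      · cases hpk : p k with
        | none => rw [rt_none hpk]; exact Relation.ReflTransGen.refl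
        | some m =>
          rw [rt_some hpk]
          have hm := hp _ _ hpk
          exact Relation.ReflTransGen.head hpk (ih m (by omega))
  exact this (k + 1) k (Nat.lt_succ_self _)

/-- main structural lemma: in a valid pred-forest, two elements of the same chain are
comparable along the chain. -/
lemma down_of_rt_eq
    (hinj : ∀ x x' m : Fin n, p x = some m → p x' = some m → x = x')
    {z y : Fin n} (hlt : z < y) (heq : rt p hp z = rt p hp y) : Down p y z := by
  have main : ∀ t : ℕ, ∀ y : Fin n, (y : ℕ) < t → ∀ z : Fin n, z < y →
      rt p hp z = rt p hp y → Down p y z := by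
    intro t
    induction t with
    | zero => omega
    | succ t ih =>
      intro y hy z hlt heq
      rcases Nat.lt_or_ge (y : ℕ) t with h | h
      · exact ih y h z hlt heq
      cases hpy : p y with
      | none =>
        exfalso
        have h1 : rt p hp y = y := rt_none hpy
        have h2 : rt p hp z ≤ z := rt_le z
        rw [h1] at heq
        exact absurd (heq ▸ h2) (not_le.2 hlt)
      | some m =>
        have hmy : m < y := hp _ _ hpy
        have hrm : rt p hp y = rt p hp m := rt_some hpy
        rcases lt_trichotomy z m with hzm | rfl | hmz
        · have : Down p m z := ih m (by omega) z hzm (heq.trans hrm)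
          exact Relation.ReflTransGen.head hpy this
        · exact Relation.ReflTransGen.single hpy
        · -- m < z < y, same root: contradiction with injectivity
          exfalso
          have hdown : Down p z m := ih z (by omega) m hmz ((heq.trans hrm).symm)
          -- decompose: since m ≠ z, there is w with Down z w and p w = some m
          rcases (Relation.ReflTransGen.cases_tail hdown) with rfl | ⟨w, hw1, hw2⟩
          · exact absurd rfl (ne_of_gt hmz)
          · have hwz : w ≤ z := down_le hp hw1
            have : w = y := hinj w y m hw2 hpy
            subst this
            exact absurd hwz (not_le.2 hlt)
  exact main (y + 1) y (Nat.lt_succ_self _) z hlt heq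

/-- the partition associated with a valid predecessor function. -/
noncomputable def fromPred (p : Fin n → Option (Fin n))
    (hp : ∀ k m : Fin n, p k = some m → m < k) :
    Finpartition (Finset.univ : Finset (Fin n)) :=
  Finpartition.ofSetoid ⟨fun x y => rt p hp x = rt p hp y,
    ⟨fun _ => rfl, fun h => h.symm, fun h h' => h.trans h'⟩⟩

lemma sameBlock_fromPred {x y : Fin n} :
    SameBlock (fromPred p hp) x y ↔ rt p hp x = rt p hp y := by
  rw [sameBlock_iff_mem_part, fromPred, Finpartition.mem_part_ofSetoid_iff_rel]; exact Iff.rfl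

lemma adj_fromPred_iff
    (hinj : ∀ x x' m : Fin n, p x = some m → p x' = some m → x = x')
    {m k : Fin n} : Adj (fromPred p hp) m k ↔ p k = some m := by
  constructor
  · rintro ⟨hlt, hsb, hmax⟩
    rw [sameBlock_fromPred] at hsb
    have hdown : Down p k m := down_of_rt_eq hinj hlt hsb
    rcases (Relation.ReflTransGen.cases_head hdown) with rfl | ⟨b, hb1, hb2⟩
    · exact absurd rfl (ne_of_gt hlt)
    · have hbm : m ≤ b := down_le hp hb2
      have hbk : b < k := hp _ _ hb1
      rcases eq_or_lt_of_le hbm with rfl | hmb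
      · exact hb1
      · exfalso
        refine hmax b hmb hbk ?_
        rw [sameBlock_fromPred]
        rw [← rt_eq_of_down hb2]
  · intro hpk
    have hlt : m < k := hp _ _ hpk
    refine ⟨hlt, sameBlock_fromPred.2 (rt_some hpk).symm, ?_⟩
    intro z hz1 hz2 hsb
    rw [sameBlock_fromPred] at hsb
    have hdown : Down p k z := down_of_rt_eq hinj hz2 (by rw [← hsb, rt_some hpk])
    rcases (Relation.ReflTransGen.cases_head hdown) with rfl | ⟨b, hb1, hb2⟩
    · exact absurd rfl (ne_of_gt hz2)
    · rw [hpk] at hb1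
      have : b = m := by injection hb1.symm
      subst this
      exact absurd (down_le hp hb2) (not_le.2 hz1)

lemma pred_fromPred
    (hinj : ∀ x x' m : Fin n, p x = some m → p x' = some m → x = x') :
    pred (fromPred p hp) = p := by
  funext k
  cases hpk : p k with
  | none =>
    rw [pred_eq_none_iff]
    intro m hm
    rw [adj_fromPred_iff hinj] at hm
    rw [hpk] at hm
    cases hm
  | some m => exact pred_eq_some_iff.2 ((adj_fromPred_iff hinj).2 hpk)

end CIR

namespace CIR
open Finset
variable {n : ℕ} {Q Q' : Finpartition (Finset.univ : Finset (Fin n))} {i k m : Fin n}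

/-- a partition is determined by its predecessor function. -/
lemma eq_of_pred_eq (h : pred Q = pred Q') : Q = Q' := by
  have hsb : ∀ x y : Fin n, SameBlock Q x y → SameBlock Q' x y := by
    have main : ∀ t : ℕ, ∀ y : Fin n, (y : ℕ) < t → ∀ x : Fin n, x < y →
        SameBlock Q x y → SameBlock Q' x y := by
      intro t
      induction t with
      | zero => omega
      | succ t ih =>
        intro y hy x hlt hxy
        rcases Nat.lt_or_ge (y : ℕ) t with hc | hc
        · exact ih y hc x hlt hxy
        obtain ⟨m, hm, hxm⟩ := exists_adj_left hlt hxy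
        have hm' : Adj Q' m y := pred_eq_some_iff.1 (h ▸ pred_eq_some_iff.2 hm)
        rcases eq_or_lt_of_le hxm with rfl | hxm
        · exact hm'.2.1
        · have h1 : SameBlock Q x m := sb_trans hxy (sb_symm hm.2.1)
          have h2 : SameBlock Q' x m := ih m (by have := hm.1; omega) x hxm h1
          exact sb_trans h2 hm'.2.1
    intro x y hxy
    rcases lt_trichotomy x y with hlt | rfl | hlt
    · exact main (y + 1) y (Nat.lt_succ_self _) x hlt hxy
    · exact sb_refl Q' x
    · exact sb_symm (main (x + 1) x (Nat.lt_succ_self _) y hlt (sb_symm hxy))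
  have hsb' : ∀ x y : Fin n, SameBlock Q x y ↔ SameBlock Q' x y := by
    have h' : pred Q' = pred Q := h.symm
    intro x y
    refine ⟨hsb x y, ?_⟩
    -- symmetric argument
    have hsb2 : ∀ x y : Fin n, SameBlock Q' x y → SameBlock Q x y := by
      have main : ∀ t : ℕ, ∀ y : Fin n, (y : ℕ) < t → ∀ x : Fin n, x < y →
          SameBlock Q' x y → SameBlock Q x y := by
        intro t
        induction t with
        | zero => omega
        | succ t ih =>
          intro y hy x hlt hxy
          rcases Nat.lt_or_ge (y : ℕ) t with hc | hc
          · exact ih y hc x hlt hxy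
          obtain ⟨m, hm, hxm⟩ := exists_adj_left hlt hxy
          have hm' : Adj Q m y := pred_eq_some_iff.1 (h' ▸ pred_eq_some_iff.2 hm)
          rcases eq_or_lt_of_le hxm with rfl | hxm
          · exact hm'.2.1
          · have h1 : SameBlock Q' x m := sb_trans hxy (sb_symm hm.2.1)
            have h2 : SameBlock Q x m := ih m (by have := hm.1; omega) x hxm h1
            exact sb_trans h2 hm'.2.1
      intro x y hxy
      rcases lt_trichotomy x y with hlt | rfl | hlt
      · exact main (y + 1) y (Nat.lt_succ_self _) x hlt hxy
      · exact sb_refl Q x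
      · exact sb_symm (main (x + 1) x (Nat.lt_succ_self _) y hlt (sb_symm hxy))
    exact hsb2 x y
  -- now parts are equal
  have hpart : ∀ x : Fin n, Q.part x = Q'.part x := by
    intro x
    ext y
    rw [← sameBlock_iff_mem_part, ← sameBlock_iff_mem_part]
    exact hsb' x y
  apply Finpartition.ext
  ext b
  constructor
  · intro hb
    obtain ⟨x, hx⟩ := Q.nonempty_of_mem_parts hb
    have : Q.part x = b := Q.part_eq_of_mem hb hx
    rw [← this, hpart]
    exact Q'.part_mem.2 (mem_univ x)
  · intro hb
    obtain ⟨x, hx⟩ := Q'.nonempty_of_mem_parts hb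
    have : Q'.part x = b := Q'.part_eq_of_mem hb hx
    rw [← this, ← hpart]
    exact Q.part_mem.2 (mem_univ x)

/-- block mins as a filter via `pred`. -/
lemma blockMins_eq_filter (Q : Finpartition (Finset.univ : Finset (Fin n))) :
    blockMins Q = univ.filter fun k => pred Q k = none := by
  ext k; simp only [mem_filter, mem_univ, true_and]; exact mem_blockMins_iff_pred

lemma blockMaxs_eq_filter (Q : Finpartition (Finset.univ : Finset (Fin n))) :
    blockMaxs Q = univ.filter fun k => ∀ x, pred Q x ≠ some k := by
  ext k; simp only [mem_filter, mem_univ, true_and]; exact mem_blockMaxs_iff_pred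

/-- the open last elements set of a partition at time `k`. -/
noncomputable def OB (Q : Finpartition (Finset.univ : Finset (Fin n))) (k : Fin n) :
    Finset (Fin n) :=
  OX (blockMaxs Q) (pred Q) (k : ℕ)

lemma mem_OB_iff : m ∈ OB Q k ↔
    m < k ∧ ∃ x : Fin n, k ≤ x ∧ pred Q x = some m := by
  unfold OB OX
  simp only [mem_filter, mem_univ, true_and, mem_blockMaxs_iff_pred]
  constructor
  · rintro ⟨h1, h2, h3⟩
    push_neg at h2
    obtain ⟨x, hx⟩ := h2
    refine ⟨h1, x, ?_, hx⟩
    by_contra hxk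
    exact h3 x (by omega) hx
  · rintro ⟨h1, x, hkx, hx⟩
    refine ⟨h1, ?_, ?_⟩
    · intro hall; exact hall x hx
    · intro x' hx' hpx'
      have : x' = x := valid_inj Q x' x m hpx' hx
      subst this
      exact absurd hkx (by omega)

lemma self_mem_OB (h : Adj Q i k) : i ∈ OB Q k :=
  mem_OB_iff.2 ⟨h.1, k, le_refl _, pred_eq_some_iff.2 h⟩

/-- the crossings-at-`k` statistic equals the number of open blocks above the insertion
point. -/
lemma crossingsAt_eq (h : Adj Q i k) :
    crossingsAt Q k = ((OB Q k).filter fun m => i < m).card := by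
  unfold crossingsAt
  apply Finset.card_bij (fun q _ => q.2.1)
  · rintro ⟨a, b, j, d⟩ hq
    simp only [mem_filter, mem_univ, true_and] at hq
    obtain ⟨h1, h2, h3, h4, h5, rfl⟩ := hq
    have : a = i := adj_left_unique h4 h
    subst this
    exact mem_filter.2 ⟨mem_OB_iff.2 ⟨h2, d, le_of_lt h3, pred_eq_some_iff.2 h5⟩, h1⟩
  · rintro ⟨a, b, j, d⟩ hq ⟨a', b', j', d'⟩ hq' heq
    simp only [mem_filter, mem_univ, true_and] at hq hq'
    obtain ⟨h1, h2, h3, h4, h5, rfl⟩ := hq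
    obtain ⟨h1', h2', h3', h4', h5', hj'⟩ := hq'
    simp only at heq hj'
    subst heq; subst hj'
    have ha : a = i := adj_left_unique h4 h
    have ha' : a' = i := adj_left_unique h4' h
    have hd : d = d' := valid_inj Q d d' b (pred_eq_some_iff.2 h5) (pred_eq_some_iff.2 h5')
    simp [ha, ha', hd]
  · intro m hm
    obtain ⟨hOB, him⟩ := mem_filter.1 hm
    obtain ⟨hmk, x, hkx, hx⟩ := mem_OB_iff.1 hOB
    have hadjx : Adj Q m x := pred_eq_some_iff.1 hx
    have hxk : k < x := by
      rcases eq_or_lt_of_le hkx with rfl | h' 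
      · exfalso
        have : m = i := adj_left_unique hadjx h
        subst this
        exact absurd him (lt_irrefl m)
      · exact h'
    refine ⟨⟨i, m, k, x⟩, ?_, rfl⟩
    simp only [mem_filter, mem_univ, true_and]
    exact ⟨him, hmk, hxk, h, hadjx, trivial⟩

lemma crossingsAt_eq_zero (h : k ∈ blockMins Q) : crossingsAt Q k = 0 := by
  unfold crossingsAt
  rw [Finset.card_eq_zero, Finset.filter_eq_empty_iff]
  rintro ⟨a, b, j, d⟩ -
  rintro ⟨h1, h2, h3, h4, h5, rfl⟩
  exact (mem_blockMins_iff.1 h) a (lt_trans h1 h2) h4.2.1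

/-- part one of the theorem: crossings decompose as a sum over non-minimal elements. -/
lemma crossings_eq_sum (Q : Finpartition (Finset.univ : Finset (Fin n))) :
    crossings Q = ∑ k ∈ Finset.univ.filter (fun k : Fin n => k ∉ blockMins Q),
      crossingsAt Q k := by
  have h1 : crossings Q = ∑ k : Fin n, crossingsAt Q k := by
    unfold crossings crossingsAt
    rw [Finset.card_eq_sum_card_fiberwise
      (f := fun q : Fin n × Fin n × Fin n × Fin n => q.2.2.1) (t := univ)
      (fun x _ => mem_univ _)]
    apply Finset.sum_congr rfl
    intro k _
    congr 1
    rw [Finset.filter_filter]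
    apply Finset.filter_congr
    intro q _
    tauto
  rw [h1]
  refine Eq.symm (Finset.sum_filter_of_ne ?_)
  intro k _ hk hc
  exact hk (crossingsAt_eq_zero hc)

/-- counting lemma for `openBlocks` in terms of mins and maxs. -/
lemma openBlocks_count (Q : Finpartition (Finset.univ : Finset (Fin n))) (k : Fin n) :
    openBlocks Q k + ((blockMaxs Q).filter fun m : Fin n => (m : ℕ) < (k : ℕ)).card
      = ((blockMins Q).filter fun m : Fin n => (m : ℕ) < (k : ℕ)).card := by
  classical
  set A := Q.parts.attach with hA
  set fmin : {x // x ∈ Q.parts} → Fin n := fun b => b.1.min' (Q.nonempty_of_mem_parts b.2)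
    with hfmin
  set fmax : {x // x ∈ Q.parts} → Fin n := fun b => b.1.max' (Q.nonempty_of_mem_parts b.2)
    with hfmax
  have hinjmin : Set.InjOn fmin A := by
    intro b hb b' hb' he
    have h1 : fmin b ∈ b.1 := b.1.min'_mem _
    have h2 : fmin b' ∈ b'.1 := b'.1.min'_mem _
    rw [he] at h1
    exact Subtype.ext (Q.eq_of_mem_parts b.2 b'.2 h1 h2)
  have hinjmax : Set.InjOn fmax A := by
    intro b hb b' hb' he
    have h1 : fmax b ∈ b.1 := b.1.max'_mem _
    have h2 : fmax b' ∈ b'.1 := b'.1.max'_mem _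
    rw [he] at h1
    exact Subtype.ext (Q.eq_of_mem_parts b.2 b'.2 h1 h2)
  have hminimg : (blockMins Q).filter (fun m : Fin n => (m : ℕ) < (k : ℕ))
      = (A.filter fun b => fmin b < k).image fmin := by
    ext m
    simp only [blockMins, mem_filter, mem_image, Finset.mem_filter]
    constructor
    · rintro ⟨⟨b, -, rfl⟩, hlt⟩
      exact ⟨b, ⟨mem_attach _ _, Fin.lt_iff_val_lt_val.2 hlt⟩, rfl⟩
    · rintro ⟨b, ⟨-, hlt⟩, rfl⟩
      exact ⟨⟨b, mem_attach _ _, rfl⟩, Fin.lt_iff_val_lt_val.1 hlt⟩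
  have hmaximg : (blockMaxs Q).filter (fun m : Fin n => (m : ℕ) < (k : ℕ))
      = (A.filter fun b => fmax b < k).image fmax := by
    ext m
    simp only [blockMaxs, mem_filter, mem_image, Finset.mem_filter]
    constructor
    · rintro ⟨⟨b, -, rfl⟩, hlt⟩
      exact ⟨b, ⟨mem_attach _ _, Fin.lt_iff_val_lt_val.2 hlt⟩, rfl⟩
    · rintro ⟨b, ⟨-, hlt⟩, rfl⟩
      exact ⟨⟨b, mem_attach _ _, rfl⟩, Fin.lt_iff_val_lt_val.1 hlt⟩
  rw [hminimg, hmaximg]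
  rw [Finset.card_image_of_injOn (hinjmin.mono (by intro x hx; exact mem_attach _ _))]
  rw [Finset.card_image_of_injOn (hinjmax.mono (by intro x hx; exact mem_attach _ _))]
  have hsplit : (A.filter fun b => fmin b < k).card
      = ((A.filter fun b => fmin b < k).filter fun b => k ≤ fmax b).card
        + ((A.filter fun b => fmin b < k).filter fun b => ¬ k ≤ fmax b).card :=
    by rw [eq_comm, Finset.card_filter_add_card_filter_not]
  have he1 : (A.filter fun b => fmin b < k).filter (fun b => k ≤ fmax b)
      = A.filter fun b => fmin b < k ∧ k ≤ fmax b := by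
    rw [Finset.filter_filter]
  have he2 : (A.filter fun b => fmin b < k).filter (fun b => ¬ k ≤ fmax b)
      = A.filter fun b => fmax b < k := by
    rw [Finset.filter_filter]
    apply Finset.filter_congr
    intro b _
    constructor
    · rintro ⟨-, h2⟩; exact not_le.1 h2
    · intro h
      refine ⟨lt_of_le_of_lt ?_ h, not_le.2 h⟩
      exact Finset.min'_le _ _ (Finset.max'_mem _ _)
  have hopen : openBlocks Q k = (A.filter fun b => fmin b < k ∧ k ≤ fmax b).card := rfl
  rw [hopen, ← he1, ← he2]
  omega

/-- the two statistic sets have the same cardinality. -/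
lemma card_blockMins_eq_card_blockMaxs (Q : Finpartition (Finset.univ : Finset (Fin n))) :
    (blockMins Q).card = (blockMaxs Q).card := by
  classical
  have h1 : (blockMins Q).card = Q.parts.attach.card := by
    apply Finset.card_image_of_injOn
    intro b hb b' hb' he
    replace he : b.1.min' (Q.nonempty_of_mem_parts b.2)
        = b'.1.min' (Q.nonempty_of_mem_parts b'.2) := he
    have h1 : b.1.min' (Q.nonempty_of_mem_parts b.2) ∈ b.1 := b.1.min'_mem _
    have h2 : b'.1.min' (Q.nonempty_of_mem_parts b'.2) ∈ b'.1 := b'.1.min'_mem _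
    rw [he] at h1
    exact Subtype.ext (Q.eq_of_mem_parts b.2 b'.2 h1 h2)
  have h2 : (blockMaxs Q).card = Q.parts.attach.card := by
    apply Finset.card_image_of_injOn
    intro b hb b' hb' he
    replace he : b.1.max' (Q.nonempty_of_mem_parts b.2)
        = b'.1.max' (Q.nonempty_of_mem_parts b'.2) := he
    have h1 : b.1.max' (Q.nonempty_of_mem_parts b.2) ∈ b.1 := b.1.max'_mem _
    have h2 : b'.1.max' (Q.nonempty_of_mem_parts b'.2) ∈ b'.1 := b'.1.max'_mem _
    rw [he] at h1
    exact Subtype.ext (Q.eq_of_mem_parts b.2 b'.2 h1 h2)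
  rw [h1, h2]

end CIR

namespace CIR
open Finset
variable {n : ℕ}

/-- choose the insertion point realizing `c k` crossings. -/
noncomputable def pick (X : Finset (Fin n)) (c : Fin n → ℕ) (p : Fin n → Option (Fin n))
    (k : Fin n) : Option (Fin n) :=
  if h : c k < (OX X p (k : ℕ)).card then
    some ((OX X p (k : ℕ)).orderEmbOfFin rfl ⟨(OX X p (k : ℕ)).card - 1 - c k, by omega⟩)
  else none

lemma pick_congr {X : Finset (Fin n)} {c : Fin n → ℕ} {p p' : Fin n → Option (Fin n)}
    {k : Fin n} (h : OX X p (k : ℕ) = OX X p' (k : ℕ)) :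
    pick X c p k = pick X c p' k := by
  simp only [pick, h]
  rfl

/-- the sequential insertion construction. -/
noncomputable def g (M X : Finset (Fin n)) (c : Fin n → ℕ) : ℕ → Fin n → Option (Fin n)
  | 0 => fun _ => none
  | t + 1 => fun k =>
      if (k : ℕ) = t ∧ k ∉ M then pick X c (g M X c t) k else g M X c t k

variable {M X : Finset (Fin n)} {c : Fin n → ℕ}

lemma g_none_of_ge : ∀ t : ℕ, ∀ k : Fin n, t ≤ (k : ℕ) → g M X c t k = none := by
  intro t
  induction t with
  | zero => intro k _; rfl
  | succ t ih =>
    intro k hk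
    show (if (k : ℕ) = t ∧ k ∉ M then pick X c (g M X c t) k else g M X c t k) = none
    rw [if_neg (by omega : ¬((k : ℕ) = t ∧ k ∉ M)), ih k (by omega)]

lemma g_mono : ∀ t t' : ℕ, t ≤ t' → ∀ k : Fin n, (k : ℕ) < t → g M X c t' k = g M X c t k := by
  intro t t' htt'
  induction t' with
  | zero => intro k hk; omega
  | succ t' ih =>
    intro k hk
    rcases Nat.lt_or_ge t (t' + 1) with h | h
    · have ht : t ≤ t' := by omega
      show (if (k : ℕ) = t' ∧ k ∉ M then pick X c (g M X c t') k else g M X c t' k)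
          = g M X c t k
      rw [if_neg (by omega : ¬((k : ℕ) = t' ∧ k ∉ M)), ih ht k hk]
    · have : t = t' + 1 := by omega
      subst this; rfl

/-- the final predecessor function. -/
noncomputable def gp (M X : Finset (Fin n)) (c : Fin n → ℕ) : Fin n → Option (Fin n) :=
  g M X c n

lemma gp_eq (k : Fin n) :
    gp M X c k = if k ∉ M then pick X c (gp M X c) k else none := by
  have h1 : gp M X c k = g M X c ((k : ℕ) + 1) k := (g_mono _ _ k.2 k (Nat.lt_succ_self _))
  have h2 : g M X c ((k : ℕ) + 1) k
      = if (k : ℕ) = (k : ℕ) ∧ k ∉ M then pick X c (g M X c (k : ℕ)) k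
        else g M X c (k : ℕ) k := rfl
  rw [h1, h2]
  by_cases hM : k ∈ M
  · rw [if_neg (by simp [hM]), if_neg (by simp [hM]), g_none_of_ge _ k (le_refl _)]
  · rw [if_pos (by simp [hM]), if_pos (by simp [hM])]
    exact pick_congr (OX_congr (fun x hx => (g_mono _ _ (by omega : (k:ℕ) ≤ n) x hx).symm))

section Invariant

variable (hcount : ∀ k : Fin n, k ∉ M →
    c k + (X.filter fun m : Fin n => (m : ℕ) < (k : ℕ)).card
      < (M.filter fun m : Fin n => (m : ℕ) < (k : ℕ)).card)

include hcount in
/-- the pointwise invariant of the construction. -/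
lemma gp_S : ∀ k : Fin n, (gp M X c k = none ↔ k ∈ M)
    ∧ ∀ m : Fin n, gp M X c k = some m → m ∈ OX X (gp M X c) (k : ℕ) := by
  have main : ∀ t : ℕ, ∀ k : Fin n, (k : ℕ) < t → (gp M X c k = none ↔ k ∈ M)
      ∧ ∀ m : Fin n, gp M X c k = some m → m ∈ OX X (gp M X c) (k : ℕ) := by
    intro t
    induction t with
    | zero => omega
    | succ t ih =>
      intro k hk
      rcases Nat.lt_or_ge (k : ℕ) t with h | h
      · exact ih k h
      by_cases hM : k ∈ M
      · rw [gp_eq]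
        simp only [hM, not_true_eq_false, if_neg, ite_false]
        refine ⟨by simp [hM], fun m hm => absurd hm (by simp)⟩
      · -- count the open blocks
        have hcard : (OX X (gp M X c) (k : ℕ)).card
            + (X.filter fun m : Fin n => (m : ℕ) < (k : ℕ)).card
            = (univ.filter fun x : Fin n => (x : ℕ) < (k : ℕ) ∧ gp M X c x = none).card := by
          apply OX_card
          · intro x m hx hpx
            have := (ih x (by omega)).2 m hpx
            simp only [OX, mem_filter, mem_univ, true_and] at this
            exact ⟨Fin.lt_iff_val_lt_val.2 this.1, this.2.1⟩
          · intro x x' m hx hx' hpx hpx'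
            rcases lt_trichotomy x x' with hc | hc | hc
            · exfalso
              have := (ih x' (by omega)).2 m hpx'
              simp only [OX, mem_filter, mem_univ, true_and] at this
              exact this.2.2 x (Fin.lt_iff_val_lt_val.1 hc) hpx
            · exact hc
            · exfalso
              have := (ih x (by omega)).2 m hpx
              simp only [OX, mem_filter, mem_univ, true_and] at this
              exact this.2.2 x' (Fin.lt_iff_val_lt_val.1 hc) hpx'
        have hfM : (univ.filter fun x : Fin n => (x : ℕ) < (k : ℕ) ∧ gp M X c x = none)
            = M.filter fun m : Fin n => (m : ℕ) < (k : ℕ) := by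
          ext x
          simp only [mem_filter, mem_univ, true_and]
          constructor
          · rintro ⟨h1, h2⟩; exact ⟨((ih x (by omega)).1).1 h2, h1⟩
          · rintro ⟨h1, h2⟩; exact ⟨h2, ((ih x (by omega)).1).2 h1⟩
        have hck : c k < (OX X (gp M X c) (k : ℕ)).card := by
          have := hcount k hM
          rw [hfM] at hcard
          omega
        rw [gp_eq]
        simp only [hM, not_false_eq_true, if_pos, ite_true]
        unfold pick
        rw [dif_pos hck]
        constructor
        · simp only [hM, iff_false, reduceCtorEq]
        · intro m hm
          have : m = (OX X (gp M X c) (k : ℕ)).orderEmbOfFin rfl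
              ⟨(OX X (gp M X c) (k : ℕ)).card - 1 - c k, by omega⟩ := by
            injection hm.symm
          rw [this]
          exact Finset.orderEmbOfFin_mem _ _ _
  intro k
  exact main ((k : ℕ) + 1) k (Nat.lt_succ_self _)

include hcount in
lemma gp_valid_lt : ∀ k m : Fin n, gp M X c k = some m → m < k := by
  intro k m h
  have := ((gp_S hcount) k).2 m h
  simp only [OX, mem_filter, mem_univ, true_and] at this
  exact Fin.lt_iff_val_lt_val.2 this.1

include hcount in
lemma gp_valid_inj : ∀ x x' m : Fin n, gp M X c x = some m → gp M X c x' = some m → x = x' := by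
  intro x x' m h h'
  rcases lt_trichotomy x x' with hc | hc | hc
  · exfalso
    have := ((gp_S hcount) x').2 m h'
    simp only [OX, mem_filter, mem_univ, true_and] at this
    exact this.2.2 x (Fin.lt_iff_val_lt_val.1 hc) h
  · exact hc
  · exfalso
    have := ((gp_S hcount) x).2 m h
    simp only [OX, mem_filter, mem_univ, true_and] at this
    exact this.2.2 x' (Fin.lt_iff_val_lt_val.1 hc) h'

include hcount in
lemma gp_maxs (hcard : M.card = X.card) :
    ∀ m : Fin n, (∀ x, gp M X c x ≠ some m) ↔ m ∈ X := by
  intro m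
  constructor
  · intro hall
    by_contra hX
    -- then m ∈ OX at time n, but OX at time n is empty by counting
    have hm : m ∈ OX X (gp M X c) n := by
      simp only [OX, mem_filter, mem_univ, true_and]
      exact ⟨m.2, hX, fun x _ => hall x⟩
    have hcardOX : (OX X (gp M X c) n).card
        + (X.filter fun m : Fin n => (m : ℕ) < n).card
        = (univ.filter fun x : Fin n => (x : ℕ) < n ∧ gp M X c x = none).card := by
      apply OX_card
      · intro x m' hx hpx
        have := ((gp_S hcount) x).2 m' hpx
        simp only [OX, mem_filter, mem_univ, true_and] at this
        exact ⟨Fin.lt_iff_val_lt_val.2 this.1, this.2.1⟩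
      · intro x x' m' _ _ hpx hpx'
        exact gp_valid_inj hcount x x' m' hpx hpx'
    have hXfull : X.filter (fun m : Fin n => (m : ℕ) < n) = X :=
      Finset.filter_true_of_mem (fun x _ => x.2)
    have hMfull : (univ.filter fun x : Fin n => (x : ℕ) < n ∧ gp M X c x = none)
        = M := by
      ext x
      simp only [mem_filter, mem_univ, true_and]
      constructor
      · rintro ⟨-, h2⟩; exact ((gp_S hcount) x).1.1 h2
      · intro h; exact ⟨x.2, ((gp_S hcount) x).1.2 h⟩
    rw [hXfull, hMfull] at hcardOX
    have : (OX X (gp M X c) n).card = 0 := by omega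
    rw [Finset.card_eq_zero] at this
    rw [this] at hm
    exact absurd hm (Finset.notMem_empty m)
  · intro hX x hx
    have := ((gp_S hcount) x).2 m hx
    simp only [OX, mem_filter, mem_univ, true_and] at this
    exact this.2.1 hX

end Invariant

end CIR

namespace CIR
open Finset
variable {n : ℕ}

lemma OB_card (Q : Finpartition (Finset.univ : Finset (Fin n))) (k : Fin n) :
    (OB Q k).card + ((blockMaxs Q).filter fun m : Fin n => (m : ℕ) < (k : ℕ)).card
      = ((blockMins Q).filter fun m : Fin n => (m : ℕ) < (k : ℕ)).card := by
  have h := OX_card (X := blockMaxs Q) (p := pred Q) (t := (k : ℕ))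
    (fun x m _ hpx => ⟨valid_lt Q x m hpx,
      fun hmax => (mem_blockMaxs_iff_pred.1 hmax) x hpx⟩)
    (fun x x' m _ _ hpx hpx' => valid_inj Q x x' m hpx hpx')
  have hfM : (univ.filter fun x : Fin n => (x : ℕ) < (k : ℕ) ∧ pred Q x = none)
      = (blockMins Q).filter fun m : Fin n => (m : ℕ) < (k : ℕ) := by
    ext x
    simp only [mem_filter, mem_univ, true_and]
    rw [← mem_blockMins_iff_pred]
    tauto
  rw [hfM] at h
  exact h

lemma gp_OX_card {M X : Finset (Fin n)} {c : Fin n → ℕ}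
    (hcount : ∀ k : Fin n, k ∉ M →
      c k + (X.filter fun m : Fin n => (m : ℕ) < (k : ℕ)).card
        < (M.filter fun m : Fin n => (m : ℕ) < (k : ℕ)).card) (k : Fin n) :
    (OX X (gp M X c) (k : ℕ)).card
      + (X.filter fun m : Fin n => (m : ℕ) < (k : ℕ)).card
      = (M.filter fun m : Fin n => (m : ℕ) < (k : ℕ)).card := by
  have h := OX_card (X := X) (p := gp M X c) (t := (k : ℕ))
    (fun x m _ hpx => by
      have := ((gp_S hcount) x).2 m hpx
      simp only [OX, mem_filter, mem_univ, true_and] at this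
      exact ⟨Fin.lt_iff_val_lt_val.2 this.1, this.2.1⟩)
    (fun x x' m _ _ hpx hpx' => gp_valid_inj hcount x x' m hpx hpx')
  have hfM : (univ.filter fun x : Fin n => (x : ℕ) < (k : ℕ) ∧ gp M X c x = none)
      = M.filter fun m : Fin n => (m : ℕ) < (k : ℕ) := by
    ext x
    simp only [mem_filter, mem_univ, true_and]
    have := ((gp_S hcount) x).1
    tauto
  rw [hfM] at h
  exact h

lemma gp_spec {M X : Finset (Fin n)} {c : Fin n → ℕ}
    (hcount : ∀ k : Fin n, k ∉ M →
      c k + (X.filter fun m : Fin n => (m : ℕ) < (k : ℕ)).card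
        < (M.filter fun m : Fin n => (m : ℕ) < (k : ℕ)).card)
    (k : Fin n) (hk : k ∉ M) :
    ∃ e : Fin n, gp M X c k = some e ∧ e ∈ OX X (gp M X c) (k : ℕ) ∧
      ((OX X (gp M X c) (k : ℕ)).filter fun m => e < m).card = c k := by
  have hck : c k < (OX X (gp M X c) (k : ℕ)).card := by
    have h1 := hcount k hk
    have h2 := gp_OX_card hcount k
    omega
  refine ⟨(OX X (gp M X c) (k : ℕ)).orderEmbOfFin rfl
      ⟨(OX X (gp M X c) (k : ℕ)).card - 1 - c k, by omega⟩, ?_,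
    Finset.orderEmbOfFin_mem _ _ _, ?_⟩
  · rw [gp_eq, if_pos hk]
    show pick _ _ _ _ = _
    rw [pick, dif_pos hck]
  · rw [card_filter_gt_orderEmbOfFin]
    show (OX X (gp M X c) (k : ℕ)).card - 1
        - ((OX X (gp M X c) (k : ℕ)).card - 1 - c k) = c k
    omega

end CIR


/-- The crossing number of a set partition generated by the sequential insertion procedure
is `∑_k X_k` where, for each non-minimal element `k`, `X_k = crossingsAt · k` counts the
crossings whose second coordinate pair ends at `k`; and, conditional on the sets of block
minima and block maxima (here those of a reference partition `P0`), the family `(X_k)` is a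
family of independent random variables with `X_k` uniform on `{0, 1, ..., a_k − 1}`,
`a_k` being the number of open blocks when `k` is inserted.  The distributional claim is
expressed combinatorially: the map `Q ↦ (X_k(Q))_k` is a bijection from the partitions with
the given block minima and maxima onto `∏_k {0, ..., a_k − 1}` (with `X_k = 0` forced for
minimal `k`), so that under the uniform measure each vector of values in the product range
is attained exactly once. -/
theorem crossing_insertion_representation (n : ℕ)
    (P0 : Finpartition (Finset.univ : Finset (Fin n))) :
    (∀ Q : Finpartition (Finset.univ : Finset (Fin n)),
      crossings Q = ∑ k ∈ Finset.univ.filter (fun k : Fin n => k ∉ blockMins Q),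
        crossingsAt Q k) ∧
    (∀ c : Fin n → ℕ,
      ((Finset.univ : Finset (Finpartition (Finset.univ : Finset (Fin n)))).filter fun Q =>
          blockMins Q = blockMins P0 ∧ blockMaxs Q = blockMaxs P0 ∧
            ∀ k, crossingsAt Q k = c k).card
        = if ∀ k : Fin n,
              (k ∈ blockMins P0 → c k = 0) ∧ (k ∉ blockMins P0 → c k < openBlocks P0 k)
          then 1 else 0) := by
  open CIR Finset in
  refine ⟨crossings_eq_sum, ?_⟩
  intro c
  by_cases hcond : ∀ k : Fin n,
      (k ∈ blockMins P0 → c k = 0) ∧ (k ∉ blockMins P0 → c k < openBlocks P0 k)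
  · rw [if_pos hcond]
    have hcount : ∀ k : Fin n, k ∉ blockMins P0 →
        c k + ((blockMaxs P0).filter fun m : Fin n => (m : ℕ) < (k : ℕ)).card
          < ((blockMins P0).filter fun m : Fin n => (m : ℕ) < (k : ℕ)).card := by
      intro k hk
      have h1 := (hcond k).2 hk
      have h2 := openBlocks_count P0 k
      omega
    have hplt := gp_valid_lt hcount
    have hpinj := gp_valid_inj hcount
    have hmaxs := gp_maxs hcount (card_blockMins_eq_card_blockMaxs P0)
    set p := gp (blockMins P0) (blockMaxs P0) c with hp
    set Qc := fromPred p hplt with hQc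
    have hpred : pred Qc = p := pred_fromPred hpinj
    have hmins : blockMins Qc = blockMins P0 := by
      rw [blockMins_eq_filter, hpred]
      ext k
      simp only [mem_filter, mem_univ, true_and]
      exact ((gp_S hcount) k).1
    have hmaxsQ : blockMaxs Qc = blockMaxs P0 := by
      rw [blockMaxs_eq_filter, hpred]
      ext k
      simp only [mem_filter, mem_univ, true_and]
      exact hmaxs k
    -- the key computation of p at a non-min k
    have hkey : ∀ k : Fin n, k ∉ blockMins P0 →
        ∃ e : Fin n, p k = some e ∧ e ∈ OX (blockMaxs P0) p (k : ℕ) ∧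
          ((OX (blockMaxs P0) p (k : ℕ)).filter fun m => e < m).card = c k :=
      fun k hk => gp_spec hcount k hk
    have hcross : ∀ k, crossingsAt Qc k = c k := by
      intro k
      by_cases hk : k ∈ blockMins P0
      · rw [crossingsAt_eq_zero (hmins ▸ hk), ((hcond k).1 hk)]
      · obtain ⟨e, hpk, hemem, hecount⟩ := hkey k hk
        have hadj : Adj Qc e k := pred_eq_some_iff.1 (by rw [hpred]; exact hpk)
        rw [crossingsAt_eq hadj]
        have hOB : OB Qc k = OX (blockMaxs P0) p (k : ℕ) := by
          unfold OB
          rw [hmaxsQ, hpred]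
        rw [hOB]
        exact hecount
    rw [Finset.card_eq_one]
    refine ⟨Qc, Finset.eq_singleton_iff_unique_mem.2
      ⟨mem_filter.2 ⟨mem_univ _, hmins, hmaxsQ, hcross⟩, ?_⟩⟩
    intro Q hQ
    obtain ⟨-, hQmins, hQmaxs, hQcr⟩ := mem_filter.1 hQ
    apply eq_of_pred_eq
    rw [hpred]
    funext k
    -- strong induction to show pred Q = p
    have main : ∀ t : ℕ, ∀ k : Fin n, (k : ℕ) < t → pred Q k = p k := by
      intro t
      induction t with
      | zero => omega
      | succ t ih =>
        intro k hkt
        rcases Nat.lt_or_ge (k : ℕ) t with h | h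
        · exact ih k h
        by_cases hk : k ∈ blockMins P0
        · exact (mem_blockMins_iff_pred.1 (hQmins.symm ▸ hk)).trans
            ((((gp_S hcount) k).1).2 hk).symm
        · obtain ⟨e, hpk, hemem, hecount⟩ := hkey k hk
          cases hpQk : pred Q k with
          | none =>
            exfalso
            exact hk (hQmins ▸ mem_blockMins_iff_pred.2 hpQk)
          | some i =>
            have hadj : Adj Q i k := pred_eq_some_iff.1 hpQk
            have hOB : OB Q k = OX (blockMaxs P0) p (k : ℕ) := by
              unfold OB
              rw [hQmaxs]
              exact OX_congr (fun x hx => ih x (by omega))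
            have hi : i ∈ OX (blockMaxs P0) p (k : ℕ) := hOB ▸ self_mem_OB hadj
            have hicount : ((OX (blockMaxs P0) p (k : ℕ)).filter fun m => i < m).card
                = c k := by
              rw [← hOB, ← crossingsAt_eq hadj, hQcr]
            have hie : i = e :=
              eq_of_card_filter_gt_eq hi hemem (by rw [hicount, hecount])
            rw [hpk, hie]
    exact main ((k : ℕ) + 1) k (Nat.lt_succ_self _)
  · rw [if_neg hcond]
    rw [Finset.card_eq_zero, Finset.filter_eq_empty_iff]
    intro Q _
    rintro ⟨hQmins, hQmaxs, hQcr⟩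
    apply hcond
    intro k
    constructor
    · intro hk
      rw [← hQcr k]
      exact crossingsAt_eq_zero (hQmins.symm ▸ hk)
    · intro hk
      cases hpQk : pred Q k with
      | none => exact absurd (hQmins ▸ mem_blockMins_iff_pred.2 hpQk) hk
      | some i =>
        have hadj : Adj Q i k := pred_eq_some_iff.1 hpQk
        have hi : i ∈ OB Q k := self_mem_OB hadj
        have hcard : (OB Q k).card = openBlocks P0 k := by
          have h1 := OB_card Q k
          have h2 := openBlocks_count P0 k
          rw [hQmins, hQmaxs] at h1
          omega
        have hsub : (OB Q k).filter (fun m => i < m) ⊆ (OB Q k).erase i := by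
          intro m hm
          exact Finset.mem_erase.2 ⟨ne_of_gt (mem_filter.1 hm).2, (mem_filter.1 hm).1⟩
        have hle : ((OB Q k).filter (fun m => i < m)).card ≤ (OB Q k).card - 1 := by
          have := Finset.card_le_card hsub
          rw [Finset.card_erase_of_mem hi] at this
          exact this
        have hpos : 0 < (OB Q k).card := Finset.card_pos.2 ⟨i, hi⟩
        rw [← hQcr k, crossingsAt_eq hadj]
        omega
end
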